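/- Let m, n, c be natural numbers with 0 ≤ m < n and c ≥ 1. Then ν₂(S(c·2^n + 2^m, 2^n)) = n − 1 − m. -/

import Mathlib

/-- Stirling numbers of the second kind. -/
def S : ℕ → ℕ → ℕ
  | 0, 0 => 1
  | 0, _ + 1 => 0
  | _ + 1, 0 => 0
  | n + 1, k + 1 => S n k + (k + 1) * S n (k + 1)

lemma S_succ (n k : ℕ) : S (n+1) (k+1) = S n k + (k+1) * S n (k+1) := rfl

lemma S_zero (n : ℕ) : S (n+1) 0 = 0 := rfl

lemma S_lt (n k : ℕ) (h : n < k) : S n k = 0 := by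
  induction n generalizing k with
  | zero => obtain ⟨k', rfl⟩ : ∃ k', k = k' + 1 := ⟨k - 1, by omega⟩; rfl
  | succ n ih =>
    obtain ⟨k', rfl⟩ : ∃ k', k = k' + 1 := ⟨k - 1, by omega⟩
    rw [S_succ, ih _ (by omega), ih _ (by omega)]; ring

lemma S_self (n : ℕ) : S n n = 1 := by
  induction n with
  | zero => rfl
  | succ n ih => rw [S_succ, ih, S_lt n (n+1) (by omega)]; ring

lemma S_one (n : ℕ) : S (n+1) 1 = 1 := by
  induction n with
  | zero => rfl
  | succ n ih => rw [S_succ, S_zero, ih]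

lemma S_two_odd (n : ℕ) : ¬ 2 ∣ S (n+2) 2 := by
  induction n with
  | zero => rw [show S 2 2 = 1 from S_self 2]; decide
  | succ n ih => rw [show n+1+2 = (n+2)+1 by ring, show (2:ℕ) = 1+1 from rfl, S_succ, S_one]; omega

lemma two_S_succ (k : ℕ) : 2 * S (k+1) k = k * (k+1) := by
  induction k with
  | zero => rfl
  | succ k ih =>
    rw [show k+1+1 = (k+1)+1 from rfl, S_succ, S_self, Nat.mul_add, ih]; ring

-- Kummer lemmas
lemma two_pow_sub_one_mod (i e : ℕ) (h : i ≤ e) : (2^e - 1) % 2^i = 2^i - 1 := by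
  have h1 : 2^e = 2^(e-i) * 2^i := by rw [← pow_add]; congr 1; omega
  have hQ := Nat.one_le_two_pow (n := e - i)
  have hP := Nat.one_le_two_pow (n := i)
  have h3 : (2^(e-i) - 1) * 2^i = 2^(e-i) * 2^i - 2^i := by rw [Nat.sub_mul, one_mul]
  have h2 : 2^e - 1 = (2^i - 1) + (2^(e-i) - 1) * 2^i := by
    rw [h3, ← h1]
    have : 2^i ≤ 2^e := Nat.pow_le_pow_right (by norm_num) h
    omega
  rw [h2, Nat.add_mul_mod_self_right, Nat.mod_eq_of_lt (by omega)]

lemma high_case (e b i : ℕ) (hi : e < i) (hb : b % 2^(e+1) ≤ 2^e) :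
    b % 2^i + (2^e - 1) % 2^i < 2^i := by
  have hdvd : (2:ℕ)^(e+1) ∣ 2^i := pow_dvd_pow 2 (by omega)
  have h1 : (2^e - 1) % 2^i = 2^e - 1 :=
    Nat.mod_eq_of_lt (by have h := Nat.pow_lt_pow_right (a := 2) one_lt_two hi; omega)
  rw [h1]
  set r := b % 2^i with hr
  have hrmod : r % 2^(e+1) = b % 2^(e+1) := Nat.mod_mod_of_dvd b hdvd
  have hrlt : r < 2^i := Nat.mod_lt _ (Nat.pow_pos (by norm_num))
  have hdecomp : r = 2^(e+1) * (r / 2^(e+1)) + r % 2^(e+1) := (Nat.div_add_mod r _).symm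
  set s := r / 2^(e+1) with hs
  set X := 2^(e+1) * s with hX
  have hslt : 2^(e+1) * (s+1) ≤ 2^i := by
    obtain ⟨q, hq⟩ := hdvd
    have hqpos : 0 < q := by
      rcases Nat.eq_zero_or_pos q with h0 | h
      · rw [h0, Nat.mul_zero] at hq; have := Nat.one_le_two_pow (n := i); omega
      · exact h
    have hsq : s < q := by
      by_contra hcon
      push_neg at hcon
      have : 2^(e+1) * q ≤ 2^(e+1) * s := Nat.mul_le_mul_left _ hcon
      omega
    rw [hq]; exact Nat.mul_le_mul_left _ (by omega)
  have hdistr : 2^(e+1) * (s+1) = X + 2^(e+1) := by rw [hX]; ring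
  have h2e : 2^(e+1) = 2 * 2^e := by rw [pow_succ]; ring
  have := Nat.one_le_two_pow (n := e)
  omega

lemma K1 (e b τ : ℕ) (hb : b ≠ 0) (hv : padicValNat 2 b < e) (hτ : τ + padicValNat 2 b ≤ e) :
    (2:ℕ)^τ ∣ (2^e - 1 + b).choose b := by
  set g := padicValNat 2 b with hg
  set B := 2^e + b with hB
  have hlog : Nat.log 2 (2^e - 1 + b) < B := by
    have hx : 2^e - 1 + b ≠ 0 := by have := Nat.one_le_two_pow (n := e); omega
    have h1 := Nat.log_lt_self 2 hx
    have := Nat.one_le_two_pow (n := e); omega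
  have hcount := padicValNat_choose' (p := 2) (k := b) (n := 2^e - 1) hlog
  have hsub : Finset.Ico (g+1) (e+1) ⊆
      (Finset.Ico 1 B).filter fun i => 2 ^ i ≤ b % 2 ^ i + (2^e - 1) % 2 ^ i := by
    intro i hi
    rw [Finset.mem_Ico] at hi
    rw [Finset.mem_filter, Finset.mem_Ico]
    have hie : i ≤ e := by omega
    refine ⟨⟨by omega, by have := Nat.lt_two_pow_self (n := e); omega⟩, ?_⟩
    rw [two_pow_sub_one_mod i e hie]
    have hnd : ¬ (2:ℕ)^i ∣ b := by
      intro hdvd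
      have := (Nat.Prime.pow_dvd_iff_le_factorization Nat.prime_two hb).mp hdvd
      rw [Nat.factorization_def _ Nat.prime_two] at this
      omega
    have : b % 2^i ≠ 0 := fun h => hnd (Nat.dvd_of_mod_eq_zero h)
    have := Nat.one_le_two_pow (n := i)
    omega
  have hcard := Finset.card_le_card hsub
  rw [Nat.card_Ico] at hcard
  have hle : τ ≤ padicValNat 2 ((2^e - 1 + b).choose b) := by omega
  calc (2:ℕ)^τ ∣ 2^(padicValNat 2 ((2^e - 1 + b).choose b)) := pow_dvd_pow 2 hle
    _ ∣ (2^e - 1 + b).choose b := pow_padicValNat_dvd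

lemma K2 (e b g : ℕ) (hg : g ≤ e) (hc : b % 2^(e+1) = 2^g) :
    padicValNat 2 ((2^e - 1 + b).choose b) = e - g := by
  set B := 2^e + b with hB
  have hb : b ≠ 0 := by
    intro h; rw [h] at hc; simp at hc; have := Nat.one_le_two_pow (n := g); omega
  have hlog : Nat.log 2 (2^e - 1 + b) < B := by
    have hx : 2^e - 1 + b ≠ 0 := by have := Nat.one_le_two_pow (n := e); omega
    have h1 := Nat.log_lt_self 2 hx
    have := Nat.one_le_two_pow (n := e); omega
  have hcount := padicValNat_choose' (p := 2) (k := b) (n := 2^e - 1) hlog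
  have hbdec : b = 2^(e+1) * (b / 2^(e+1)) + 2^g := by rw [← hc]; exact (Nat.div_add_mod b _).symm
  have hset : ((Finset.Ico 1 B).filter fun i => 2 ^ i ≤ b % 2 ^ i + (2^e - 1) % 2 ^ i)
      = Finset.Ico (g+1) (e+1) := by
    ext i
    rw [Finset.mem_filter, Finset.mem_Ico, Finset.mem_Ico]
    constructor
    · rintro ⟨⟨h1, h2⟩, hcond⟩
      have hie : i ≤ e := by
        by_contra hgt
        push_neg at hgt
        have := high_case e b i (by omega)
          (by rw [hc]; exact Nat.pow_le_pow_right (by norm_num) hg)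
        omega
      constructor
      · by_contra hlt
        push_neg at hlt
        have hig : i ≤ g := by omega
        have hdvd : (2:ℕ)^i ∣ b := by
          rw [hbdec]
          exact Nat.dvd_add (Dvd.dvd.mul_right (pow_dvd_pow 2 (by omega)) _)
            (pow_dvd_pow 2 hig)
        have hmod : b % 2^i = 0 := Nat.mod_eq_zero_of_dvd hdvd
        rw [hmod, two_pow_sub_one_mod i e hie] at hcond
        have := Nat.one_le_two_pow (n := i)
        omega
      · omega
    · rintro ⟨h1, h2⟩
      have hie : i ≤ e := by omega
      refine ⟨⟨by omega, by have := Nat.lt_two_pow_self (n := e); omega⟩, ?_⟩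
      rw [two_pow_sub_one_mod i e hie]
      have hnd : ¬ (2:ℕ)^i ∣ b := by
        intro hdvd
        have hg1 : (2:ℕ)^(g+1) ∣ b := dvd_trans (pow_dvd_pow 2 (by omega : g+1 ≤ i)) hdvd
        have hg2 : (2:ℕ)^(g+1) ∣ 2^(e+1) * (b / 2^(e+1)) :=
          Dvd.dvd.mul_right (pow_dvd_pow 2 (by omega)) _
        have hg3 : (2:ℕ)^(g+1) ∣ 2^g := by
          have : (2:ℕ)^g = b - 2^(e+1) * (b / 2^(e+1)) := by omega
          rw [this]; exact Nat.dvd_sub hg1 hg2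
        have := Nat.le_of_dvd (Nat.pow_pos (by norm_num)) hg3
        have : (2:ℕ)^g < 2^(g+1) := Nat.pow_lt_pow_right one_lt_two (by omega)
        omega
      have : b % 2^i ≠ 0 := fun h => hnd (Nat.dvd_of_mod_eq_zero h)
      have := Nat.one_le_two_pow (n := i)
      omega
  rw [hcount, hset, Nat.card_Ico]; omega

lemma K2a (e b : ℕ) (hc : b % 2^(e+1) = 0) :
    padicValNat 2 ((2^e - 1 + b).choose b) = 0 := by
  rcases Nat.eq_zero_or_pos b with rfl | hb
  · rw [Nat.choose_zero_right, padicValNat.one]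
  set B := 2^e + b with hB
  have hlog : Nat.log 2 (2^e - 1 + b) < B := by
    have hx : 2^e - 1 + b ≠ 0 := by have := Nat.one_le_two_pow (n := e); omega
    have h1 := Nat.log_lt_self 2 hx
    have := Nat.one_le_two_pow (n := e); omega
  have hcount := padicValNat_choose' (p := 2) (k := b) (n := 2^e - 1) hlog
  have hset : ((Finset.Ico 1 B).filter fun i => 2 ^ i ≤ b % 2 ^ i + (2^e - 1) % 2 ^ i)
      = ∅ := by
    rw [Finset.eq_empty_iff_forall_notMem]
    intro i hi
    rw [Finset.mem_filter, Finset.mem_Ico] at hi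
    obtain ⟨⟨h1, h2⟩, hcond⟩ := hi
    rcases le_or_gt i e with hie | hie
    · have hdvd : (2:ℕ)^i ∣ b := by
        have : (2:ℕ)^i ∣ 2^(e+1) := pow_dvd_pow 2 (by omega)
        exact dvd_trans this (Nat.dvd_of_mod_eq_zero hc)
      have hmod : b % 2^i = 0 := Nat.mod_eq_zero_of_dvd hdvd
      rw [hmod, two_pow_sub_one_mod i e hie] at hcond
      have := Nat.one_le_two_pow (n := i)
      omega
    · have := high_case e b i hie (by rw [hc]; exact Nat.zero_le _)
      omega
  rw [hcount, hset, Finset.card_empty]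

open Finset PowerSeries

section Perturb
variable {R : Type*} [CommRing R]

lemma prod_perturb (s : Finset ℕ) (a b : ℕ → R) (c : R)
    (h : ∀ i ∈ s, ∃ w, a i = b i + c * w) :
    ∃ W, ∏ i ∈ s, a i = ∏ i ∈ s, b i + c * W := by
  classical
  revert h
  refine Finset.induction_on s ?_ ?_
  · intro _; exact ⟨0, by simp⟩
  · intro j s hj ih h
    obtain ⟨wj, hwj⟩ := h j (mem_insert_self _ _)
    obtain ⟨W, hW⟩ := ih (fun i hi => h i (mem_insert_of_mem hi))
    refine ⟨wj * ∏ i ∈ s, b i + (b j + c * wj) * W, ?_⟩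
    rw [Finset.prod_insert hj, Finset.prod_insert hj, hwj, hW]; ring

lemma pow_perturb (x c h : R) (M : ℕ) : ∃ W, (x + c * h)^M = x^M + c * W := by
  induction M with
  | zero => exact ⟨0, by simp⟩
  | succ M ih =>
    obtain ⟨W, hW⟩ := ih
    exact ⟨W * x + h * x^M + c * h * W, by rw [pow_succ, hW, pow_succ]; ring⟩

lemma sum_perturb (s : Finset ℕ) (F : ℕ → R) (G : R)
    (h : ∀ j ∈ s, ∃ V, F j = G + 2 * V) :
    ∃ U, ∑ j ∈ s, F j = (s.card : R) * G + 2 * U := by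
  classical
  revert h
  refine Finset.induction_on s ?_ ?_
  · intro _; exact ⟨0, by simp⟩
  · intro j s hj ih h
    obtain ⟨vj, hvj⟩ := h j (mem_insert_self _ _)
    obtain ⟨U, hU⟩ := ih (fun i hi => h i (mem_insert_of_mem hi))
    refine ⟨vj + U, ?_⟩
    rw [Finset.sum_insert hj, Finset.card_insert_of_notMem hj, hvj, hU]
    push_cast; ring

lemma prod_perturb2 (s : Finset ℕ) (f e : ℕ → R) (c : R) :
    ∃ D, ∏ i ∈ s, (f i + c * e i)
      = ∏ i ∈ s, f i + c * (∑ i ∈ s, e i * ∏ j ∈ s.erase i, f j) + c^2 * D := by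
  classical
  induction s using Finset.induction_on with
  | empty => exact ⟨0, by simp⟩
  | @insert j s hj ih =>
    obtain ⟨D, hD⟩ := ih
    have hsum : ∑ i ∈ insert j s, e i * ∏ l ∈ (insert j s).erase i, f l
        = e j * ∏ l ∈ s, f l + f j * ∑ i ∈ s, e i * ∏ l ∈ s.erase i, f l := by
      rw [Finset.sum_insert hj, Finset.erase_insert hj, Finset.mul_sum]
      congr 1
      refine Finset.sum_congr rfl ?_
      intro i hi
      have hji : j ≠ i := fun hh => hj (hh ▸ hi)
      rw [Finset.erase_insert_of_ne hji,
        Finset.prod_insert (fun h => hj (Finset.mem_of_mem_erase h))]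
      ring
    refine ⟨f j * D + e j * (∑ i ∈ s, e i * ∏ l ∈ s.erase i, f l) + c * (e j * D), ?_⟩
    rw [Finset.prod_insert hj, Finset.prod_insert hj, hD, hsum]
    ring

lemma prod_mod_period (g : ℕ → R) (P : ℕ) (c : R)
    (hper : ∀ q r, r < P → ∃ w, g (q * P + r) = g r + c * w) (M : ℕ) :
    ∃ W, ∏ j ∈ range (M * P), g j = (∏ j ∈ range P, g j)^M + c * W := by
  induction M with
  | zero => exact ⟨0, by simp⟩
  | succ M ih =>
    obtain ⟨W, hW⟩ := ih
    have hsplit : ∏ j ∈ range ((M+1) * P), g j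
        = (∏ j ∈ range (M * P), g j) * ∏ j ∈ range P, g (M * P + j) := by
      rw [show (M+1)*P = M*P + P by ring, Finset.prod_range_add]
    obtain ⟨W₁, hW₁⟩ := prod_perturb (range P) (fun j => g (M * P + j)) g c
      (fun j hjm => hper M j (mem_range.mp hjm))
    set x := ∏ j ∈ range P, g j
    exact ⟨W * x + W₁ * x^M + c * W * W₁, by rw [hsplit, hW, hW₁, pow_succ]; ring⟩

lemma prod_range_even_odd (f : ℕ → R) (N : ℕ) :
    ∏ i ∈ range (2 * N), f i = (∏ j ∈ range N, f (2 * j)) * ∏ j ∈ range N, f (2 * j + 1) := by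
  induction N with
  | zero => simp
  | succ N ih =>
    rw [show 2 * (N + 1) = (2 * N + 1) + 1 by ring, prod_range_succ, prod_range_succ,
      prod_range_succ, prod_range_succ, ih]
    ring

end Perturb

noncomputable section

abbrev R' : Type := PowerSeries ℤ

lemma odd_prod : ∀ k : ℕ, 2 ≤ k → ∃ H : R',
    ∏ j ∈ range (2^(k-1)), (1 - ((2*j+1 : ℕ) : R') * X)
      = (1 - X^2)^(2^(k-2)) + ((2^k : ℕ) : R') * H := by
  intro k hk
  induction k, hk using Nat.le_induction with
  | base =>
    refine ⟨X^2 - X, ?_⟩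
    rw [show (2:ℕ)^(2-1) = 2 from rfl, prod_range_succ, prod_range_one]
    push_cast
    ring
  | succ k hk ih =>
    obtain ⟨H₀, hIH⟩ := ih
    set M := 2^(k-1) with hM
    have h2M : 2 * M = 2^k := by
      rw [hM, ← pow_succ']; congr 1; omega
    set c : R' := ((2^k : ℕ) : R') with hc
    set c' : R' := ((2^(k+1) : ℕ) : R') with hc'
    set Q : R' := (1 - X^2)^(2^(k-2)) with hQ
    set f : ℕ → R' := fun j => 1 - ((2*j+1 : ℕ) : R') * X with hf
    -- cast facts
    have hc2 : c * 2 = c' := by rw [hc, hc']; push_cast [pow_succ]; ring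
    have hcM : c * ((M : ℕ) : R') = c' * ((2^(k-2) : ℕ) : R') := by
      rw [hc, hc', hM, ← Nat.cast_mul, ← Nat.cast_mul, ← pow_add, ← pow_add]
      congr 2; omega
    have hcc : c * c = c' * ((2^(k-1) : ℕ) : R') := by
      rw [hc, hc', ← Nat.cast_mul, ← Nat.cast_mul, ← pow_add, ← pow_add]
      congr 2; omega
    -- split the product
    have hsplit : ∏ j ∈ range (2^(k+1-1)), f j
        = (∏ j ∈ range M, f j) * ∏ j ∈ range M, f (M + j) := by
      rw [show (2:ℕ)^(k+1-1) = M + M by rw [Nat.add_sub_cancel]; omega, Finset.prod_range_add]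
    have hshift : ∀ j, f (M + j) = f j + c * (-X) := by
      intro j
      have hcast : (2*(M+j)+1 : ℕ) = (2*j+1) + 2^k := by omega
      rw [hf]; simp only []
      rw [hcast, Nat.cast_add, hc]; ring
    -- second product
    obtain ⟨D, hD⟩ := prod_perturb2 (range M) f (fun _ => -X) c
    have hprod2 : ∏ j ∈ range M, f (M + j)
        = ∏ j ∈ range M, f j + c * (∑ i ∈ range M, (-X) * ∏ l ∈ (range M).erase i, f l)
          + c^2 * D := by
      rw [← hD]
      exact Finset.prod_congr rfl fun j _ => hshift j
    -- the sum is (M:R')*G + 2*U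
    have herase : ∀ i ∈ range M, ∃ V, (-X) * ∏ l ∈ (range M).erase i, f l
        = (-X) * (1 - X)^(M-1) + 2 * V := by
      intro i hi
      obtain ⟨W, hW⟩ := prod_perturb ((range M).erase i) f (fun _ => (1 - X)) 2
        (fun l _ => ⟨-((l : ℕ) : R') * X, by rw [hf]; simp only []; push_cast; ring⟩)
      refine ⟨(-X) * W, ?_⟩
      rw [hW, Finset.prod_const, Finset.card_erase_of_mem hi, Finset.card_range]
      ring
    obtain ⟨U, hU⟩ := sum_perturb (range M) _ ((-X) * (1 - X)^(M-1)) herase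
    rw [Finset.card_range] at hU
    -- |range M| even, so the sum ~ 2*(...)
    -- assemble
    set P : R' := ∏ j ∈ range M, f j with hP
    set Sg : R' := ∑ i ∈ range M, (-X) * ∏ l ∈ (range M).erase i, f l with hSg
    set G : R' := (-X) * (1 - X)^(M-1) with hG
    have e1 : P * P = Q^2 + c' * (Q * H₀ + ((2^(k-1):ℕ) : R') * (H₀ * H₀)) := by
      rw [hIH]
      linear_combination (Q * H₀) * hc2 + (H₀ * H₀) * hcc
    have e2 : c * (P * Sg) = c' * (((2^(k-2):ℕ) : R') * (P * G) + P * U) := by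
      rw [hU]
      linear_combination (P * G) * hcM + (P * U) * hc2
    have e3 : c^2 * (P * D) = c' * (((2^(k-1):ℕ) : R') * (P * D)) := by
      linear_combination (P * D) * hcc
    have hQ2 : Q^2 = (1 - X^2)^(2^(k+1-2)) := by
      rw [hQ, ← pow_mul]; congr 1; rw [← pow_succ]; congr 1; omega
    refine ⟨Q * H₀ + ((2^(k-1):ℕ) : R') * (H₀ * H₀)
      + (((2^(k-2):ℕ) : R') * (P * G) + P * U)
      + ((2^(k-1):ℕ) : R') * (P * D), ?_⟩
    calc ∏ j ∈ range (2^(k+1-1)), f j = P * (P + c * Sg + c^2 * D) := by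
          rw [hsplit, hprod2]
      _ = P * P + c * (P * Sg) + c^2 * (P * D) := by ring
      _ = (1 - X^2)^(2^(k+1-2)) + c' * (Q * H₀ + ((2^(k-1):ℕ) : R') * (H₀ * H₀)
            + (((2^(k-2):ℕ) : R') * (P * G) + P * U)
            + ((2^(k-1):ℕ) : R') * (P * D)) := by
          rw [e1, e2, e3, hQ2]; ring


def FS (k : ℕ) : R' := PowerSeries.mk fun a => ((S (a + k) k : ℕ) : ℤ)

def gp (k : ℕ) : R' := ∏ i ∈ range k, (1 - ((i+1 : ℕ) : R') * X)

lemma natCast_eq_C (c : ℕ) : ((c : ℕ) : R') = C ((c : ℕ) : ℤ) := (map_natCast C c).symm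

lemma coeff_natCast_mul (c : ℕ) (φ : R') (n : ℕ) :
    coeff n (((c : ℕ) : R') * φ) = (c : ℤ) * coeff n φ := by
  rw [natCast_eq_C, coeff_C_mul]

lemma gp_mul_FS (k : ℕ) : gp k * FS k = 1 := by
  induction k with
  | zero =>
    rw [gp, Finset.range_zero, Finset.prod_empty, one_mul]
    ext n
    rw [FS, coeff_mk, coeff_one]
    cases n with
    | zero => rw [Nat.zero_add, show S 0 0 = 1 from rfl]; simp
    | succ n => rw [show (n+1+0) = n+1 from rfl, S_zero]; simp
  | succ k ih =>
    have key : (1 - ((k+1 : ℕ) : R') * X) * FS (k+1) = FS k := by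
      ext n
      have expand : (1 - ((k+1 : ℕ) : R') * X) * FS (k+1)
          = FS (k+1) - ((k+1:ℕ) : R') * (X * FS (k+1)) := by ring
      rw [expand, map_sub, coeff_natCast_mul]
      cases n with
      | zero =>
        rw [coeff_zero_X_mul, FS, FS]
        simp only [coeff_mk]
        rw [Nat.zero_add, Nat.zero_add, S_self]
        simp [S_self]
      | succ n =>
        rw [coeff_succ_X_mul, FS, FS]
        simp only [coeff_mk]
        have h1 : n + 1 + (k+1) = (n+k+1) + 1 := by omega
        have h2 : n + (k+1) = n+k+1 := by omega
        have h3 : n + 1 + k = n+k+1 := by omega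
        rw [h1, h2, h3, S_succ (n+k+1) k]
        push_cast; ring
    calc gp (k+1) * FS (k+1)
        = gp k * ((1 - ((k+1 : ℕ) : R') * X) * FS (k+1)) := by
          rw [gp, Finset.prod_range_succ, ← gp]; ring
      _ = gp k * FS k := by rw [key]
      _ = 1 := ih

def Ainv (e : ℕ) : R' :=
  PowerSeries.mk fun u => if Even u then (((e - 1 + u/2).choose (u/2) : ℕ) : ℤ) else 0

lemma coeff_one_sub_sq (φ : R') (n : ℕ) :
    coeff n ((1 - X^2) * φ) = coeff n φ - if n < 2 then 0 else coeff (n-2) φ := by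
  have expand : (1 - X^2) * φ = φ - X^2 * φ := by ring
  rw [expand, map_sub]
  congr 1
  match n with
  | 0 => rw [if_pos (by omega), show (X^2 : R') = X * X by ring, mul_assoc, coeff_zero_X_mul]
  | 1 => rw [if_pos (by omega), show (X^2 : R') = X * X by ring, mul_assoc,
      coeff_succ_X_mul, coeff_zero_X_mul]
  | (d+2) => rw [if_neg (by omega), show d+2-2 = d by omega, show d+2 = d+2 from rfl,
      coeff_X_pow_mul φ 2 d]

lemma one_sub_sq_mul_Ainv : ∀ e : ℕ, 1 ≤ e → (1 - X^2)^e * Ainv e = 1 := by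
  intro e he
  induction e, he using Nat.le_induction with
  | base =>
    rw [pow_one]
    ext n
    rw [coeff_one_sub_sq, coeff_one, Ainv]
    simp only [coeff_mk]
    match n with
    | 0 => simp
    | 1 => simp
    | (d+2) =>
      rw [if_neg (show ¬(d+2<2) by omega), show d+2-2 = d by omega,
        if_neg (show ¬(d+2=0) by omega)]
      have h22 : Even (d+2) ↔ Even d := by simp [Nat.even_add]
      simp only [show (1:ℕ)-1 = 0 from rfl, Nat.zero_add, Nat.choose_self]
      by_cases hd : Even d
      · rw [if_pos (h22.mpr hd), if_pos hd]; ring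
      · rw [if_neg (fun h => hd (h22.mp h)), if_neg hd]; ring
  | succ e he ih =>
    have key : (1 - X^2) * Ainv (e+1) = Ainv e := by
      ext n
      rw [coeff_one_sub_sq, Ainv, Ainv]
      simp only [coeff_mk]
      match n with
      | 0 => simp
      | 1 => simp
      | (d+2) =>
        rw [if_neg (show ¬(d+2<2) by omega), show d+2-2 = d by omega]
        have h22 : Even (d+2) ↔ Even d := by simp [Nat.even_add]
        by_cases hd : Even d
        · rw [if_pos (h22.mpr hd), if_pos hd, if_pos (h22.mpr hd)]
          have hdiv : (d+2)/2 = d/2 + 1 := by omega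
          rw [hdiv, show e+1-1 = e from rfl, show e - 1 + (d/2+1) = (e+d/2) by omega,
            show e + (d/2+1) = (e+d/2)+1 by omega, Nat.choose_succ_succ' (e+d/2) (d/2)]
          push_cast; ring
        · rw [if_neg (fun h => hd (h22.mp h)), if_neg hd, if_neg (fun h => hd (h22.mp h))]
          ring
    calc (1 - X^2)^(e+1) * Ainv (e+1)
        = (1 - X^2)^e * ((1 - X^2) * Ainv (e+1)) := by ring
      _ = (1 - X^2)^e * Ainv e := by rw [key]
      _ = 1 := ih

lemma odd_part (n t : ℕ) (hn : 2 ≤ n) (ht1 : 1 ≤ t) (htn : t ≤ n) :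
    ∃ W : R', ∏ j ∈ range (2^(n-1)), (1 - ((2*j+1 : ℕ) : R') * X)
      = (1 - X^2)^(2^(n-2)) + ((2^t : ℕ) : R') * W := by
  rcases Nat.lt_or_ge t 2 with ht2 | ht2
  · -- t = 1
    have ht : t = 1 := by omega
    subst ht
    obtain ⟨W₁, hW₁⟩ := prod_perturb (range (2^(n-1)))
      (fun j => 1 - ((2*j+1 : ℕ) : R') * X) (fun _ => 1 - X) 2
      (fun j _ => ⟨-((j : ℕ) : R') * X, by push_cast; ring⟩)
    rw [Finset.prod_const, Finset.card_range] at hW₁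
    obtain ⟨W₂, hW₂⟩ := pow_perturb ((1 - X^2 : R')) 2 ((X^2 - X : R')) (2^(n-2))
    have hsq : (((1 - X^2 : R')) + 2 * (X^2 - X))^(2^(n-2)) = (1 - X)^(2^(n-1)) := by
      rw [show (((1 - X^2 : R')) + 2 * (X^2 - X) : R') = (1-X)^2 by ring, ← pow_mul]
      congr 1
      rw [← pow_succ']; congr 1; omega
    refine ⟨W₁ + W₂, ?_⟩
    rw [hW₁, ← hsq, hW₂]
    push_cast; ring
  · -- t ≥ 2
    obtain ⟨H, hH⟩ := odd_prod t ht2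
    have h2t : 2 * 2^(t-1) = 2^t := by rw [← pow_succ']; congr 1; omega
    have hper : ∀ q r, r < 2^(t-1) → ∃ w : R',
        ((1 : R') - ((2*(q * 2^(t-1) + r)+1 : ℕ) : R') * X)
          = ((1 : R') - ((2*r+1 : ℕ) : R') * X) + ((2^t : ℕ) : R') * w := by
      intro q r _
      have hA : 2^t * q = 2 * (q * 2^(t-1)) := by rw [← h2t]; ring
      have hnat : (2*(q * 2^(t-1) + r)+1 : ℕ) = (2*r+1) + 2^t * q := by omega
      exact ⟨-((q : ℕ) : R') * X, by rw [hnat]; push_cast; ring⟩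
    obtain ⟨W₀, hW₀⟩ := prod_mod_period (fun j => 1 - ((2*j+1 : ℕ) : R') * X)
      (2^(t-1)) (((2^t : ℕ) : R')) hper (2^(n-t))
    have hMP : 2^(n-t) * 2^(t-1) = 2^(n-1) := by rw [← pow_add]; congr 1; omega
    rw [hMP] at hW₀
    obtain ⟨W₂, hW₂⟩ := pow_perturb (((1 - X^2 : R'))^(2^(t-2))) (((2^t : ℕ) : R')) H (2^(n-t))
    have hpow : (((1 - X^2 : R'))^(2^(t-2)))^(2^(n-t)) = (1 - X^2)^(2^(n-2)) := by
      rw [← pow_mul]; congr 1; rw [← pow_add]; congr 1; omega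
    refine ⟨W₀ + W₂, ?_⟩
    rw [hW₀, hH, hW₂, hpow]; ring

lemma rescale_factor (c : ℕ) : rescale (2:ℤ) (1 - ((c : ℕ) : R') * X) = 1 - ((2*c : ℕ) : R') * X := by
  rw [map_sub, map_one, map_mul, rescale_X, map_natCast,
    show ((C 2 : R')) = 2 from map_ofNat _ 2]
  push_cast; ring

lemma rescale_gp (k : ℕ) : rescale (2:ℤ) (gp k) = ∏ j ∈ range k, (1 - ((2*j+2 : ℕ) : R') * X) := by
  rw [gp, map_prod]
  refine Finset.prod_congr rfl fun i _ => ?_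
  rw [rescale_factor, show 2*(i+1) = 2*i+2 by ring]

lemma gp_split (n t : ℕ) (hn : 2 ≤ n) (ht1 : 1 ≤ t) (htn : t ≤ n) :
    ∃ W : R', gp (2^n) = (1 - X^2)^(2^(n-2)) * rescale (2:ℤ) (gp (2^(n-1)))
      + ((2^t : ℕ) : R') * W := by
  have hsplit : gp (2^n) = (∏ j ∈ range (2^(n-1)), (1 - ((2*j+1 : ℕ) : R') * X))
      * ∏ j ∈ range (2^(n-1)), (1 - ((2*j+2 : ℕ) : R') * X) := by
    rw [gp, show (2:ℕ)^n = 2 * 2^(n-1) by rw [← pow_succ']; congr 1; omega,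
      prod_range_even_odd]
  obtain ⟨W, hW⟩ := odd_part n t hn ht1 htn
  refine ⟨W * ∏ j ∈ range (2^(n-1)), (1 - ((2*j+2 : ℕ) : R') * X), ?_⟩
  rw [hsplit, hW, rescale_gp]; ring

lemma key_identity (n t : ℕ) (hn : 2 ≤ n) (ht1 : 1 ≤ t) (htn : t ≤ n) :
    ∃ J : R', FS (2^n) = Ainv (2^(n-2)) * rescale (2:ℤ) (FS (2^(n-1)))
      + ((2^t : ℕ) : R') * J := by
  obtain ⟨W, hW⟩ := gp_split n t hn ht1 htn
  set c : R' := ((2^t : ℕ) : R')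
  set F := FS (2^n)
  set A := Ainv (2^(n-2))
  set Q : R' := (1 - X^2)^(2^(n-2))
  set ρg := rescale (2:ℤ) (gp (2^(n-1)))
  set ρF := rescale (2:ℤ) (FS (2^(n-1)))
  have e1 : gp (2^n) * F = 1 := gp_mul_FS (2^n)
  have e2 : Q * A = 1 := one_sub_sq_mul_Ainv (2^(n-2)) Nat.one_le_two_pow
  have e3 : ρg * ρF = 1 := by
    rw [← map_mul, gp_mul_FS, map_one]
  have hQρg : Q * ρg = gp (2^n) - c * W := by rw [hW]; ring
  refine ⟨-(A * ρF * W * F), ?_⟩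
  calc F = (Q * A) * (ρg * ρF) * F := by rw [e2, e3]; ring
    _ = A * ρF * (Q * ρg * F) := by ring
    _ = A * ρF * ((gp (2^n) - c * W) * F) := by rw [hQρg]
    _ = A * ρF * (gp (2^n) * F) - c * (A * ρF * W * F) := by ring
    _ = A * ρF + c * -(A * ρF * W * F) := by rw [e1]; ring

lemma Rcong (n t a : ℕ) (hn : 2 ≤ n) (ht1 : 1 ≤ t) (htn : t ≤ n) :
    ∃ j : ℤ, ((S (a + 2^n) (2^n) : ℕ) : ℤ)
      = (∑ p ∈ Finset.HasAntidiagonal.antidiagonal a,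
          (if Even p.1 then (((2^(n-2) - 1 + p.1/2).choose (p.1/2) : ℕ) : ℤ) else 0)
            * 2^p.2 * ((S (p.2 + 2^(n-1)) (2^(n-1)) : ℕ) : ℤ))
        + 2^t * j := by
  obtain ⟨J, hJ⟩ := key_identity n t hn ht1 htn
  refine ⟨coeff a J, ?_⟩
  have := congrArg (coeff a) hJ
  rw [map_add, coeff_mul, coeff_natCast_mul] at this
  rw [FS, coeff_mk] at this
  rw [this]
  congr 1
  · refine Finset.sum_congr rfl fun p _ => ?_
    rw [coeff_rescale, FS, coeff_mk, Ainv, coeff_mk]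
    ring

lemma pv_lt_self (v : ℕ) (hv : 1 ≤ v) : padicValNat 2 v < v := by
  have h1 : 2^(padicValNat 2 v) ∣ v := pow_padicValNat_dvd
  have h2 : 2^(padicValNat 2 v) ≤ v := Nat.le_of_dvd (by omega) h1
  have h3 := Nat.lt_two_pow_self (n := padicValNat 2 v)
  omega

lemma pv_even (a : ℕ) (ha : a ≠ 0) (he : 2 ∣ a) :
    padicValNat 2 a = padicValNat 2 (a/2) + 1 := by
  obtain ⟨b, rfl⟩ := he
  have hb : b ≠ 0 := by omega
  rw [Nat.mul_div_cancel_left b (by norm_num), padicValNat.mul (by norm_num) hb,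
    padicValNat.self (by norm_num)]
  omega

lemma G1 : ∀ n a τ : ℕ, 1 ≤ a → τ + padicValNat 2 a ≤ n - 1 →
    (2^τ : ℤ) ∣ ((S (a + 2^n) (2^n) : ℕ) : ℤ) := by
  intro n
  induction n with
  | zero =>
    intro a τ ha hτ
    have : τ = 0 := by omega
    subst this; simp
  | succ n ih =>
    intro a τ ha hτ
    rcases Nat.eq_zero_or_pos τ with rfl | hτ1
    · simp
    obtain ⟨j, hj⟩ := Rcong (n+1) τ a (by omega) hτ1 (by omega)
    rw [hj]
    refine dvd_add (Finset.dvd_sum ?_) (Dvd.intro j rfl)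
    intro p hp
    rw [Finset.HasAntidiagonal.mem_antidiagonal] at hp
    by_cases hu : Even p.1
    · rcases Nat.eq_zero_or_pos p.2 with hv0 | hv1
      · -- p.2 = 0, p.1 = a even
        have hp1 : p.1 = a := by omega
        have hae : 2 ∣ a := by
          rw [← hp1]; exact hu.two_dvd
        have hb : a / 2 ≠ 0 := by omega
        have hpv := pv_even a (by omega) hae
        have hK := K1 (n+1-2) (a/2) τ hb (by omega) (by omega)
        rw [if_pos hu, hv0, hp1]
        have hcast : (2^τ : ℤ) ∣ (((2^(n+1-2) - 1 + a/2).choose (a/2) : ℕ) : ℤ) := by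
          exact_mod_cast Int.natCast_dvd_natCast.mpr hK
        exact dvd_mul_of_dvd_left (dvd_mul_of_dvd_left hcast _) _
      · -- p.2 ≥ 1
        rcases le_or_gt τ p.2 with hle | hlt
        · refine dvd_mul_of_dvd_left (dvd_mul_of_dvd_right ?_ _) _
          exact pow_dvd_pow (2:ℤ) hle
        · have hpv2 := pv_lt_self p.2 hv1
          have hS := ih p.2 (τ - p.2) hv1 (by omega)
          have h2 : (2^τ : ℤ) = 2^p.2 * 2^(τ - p.2) := by
            rw [← pow_add]; congr 1; omega
          rw [h2]
          exact mul_dvd_mul (dvd_mul_left _ _) hS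
    · rw [if_neg hu]
      simp

lemma G2 (n m d : ℕ) (hn : 2 ≤ n) (hm : m < n) :
    ∃ q : ℤ, ((S ((d * 2^n + 2^m) + 2^n) (2^n) : ℕ) : ℤ) = 2^(n-m-1) * (2*q + 1) := by
  set t := n - m with ht
  have ht1 : 1 ≤ t := by omega
  obtain ⟨j, hj⟩ := Rcong n t (d * 2^n + 2^m) hn ht1 (by omega)
  set a := d * 2^n + 2^m with ha
  set T : ℕ × ℕ → ℤ := fun p =>
    (if Even p.1 then (((2^(n-2) - 1 + p.1/2).choose (p.1/2) : ℕ) : ℤ) else 0)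
      * 2^p.2 * ((S (p.2 + 2^(n-1)) (2^(n-1)) : ℕ) : ℤ) with hT
  have hpow1 : (2:ℕ)^n = 2 * 2^(n-1) := by rw [← pow_succ']; congr 1; omega
  have hpow2 : (2:ℕ)^(n-1) = 2 * 2^(n-2) := by rw [← pow_succ']; congr 1; omega
  have h2t : (2:ℤ)^t = 2^(t-1) * 2 := by rw [← pow_succ]; congr 1; omega
  rcases Nat.eq_zero_or_pos m with rfl | hm1
  · -- m = 0 case : a = d*2^n + 1, special term (a-1, 1)
    have htn : t = n := by omega
    have hp₀ : (d * 2^n, 1) ∈ Finset.HasAntidiagonal.antidiagonal a := by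
      rw [Finset.HasAntidiagonal.mem_antidiagonal]; simp [ha]
    rw [← Finset.add_sum_erase _ T hp₀] at hj
    -- the special term
    have hb2 : (d * 2^n) / 2 = d * 2^(n-1) := by
      rw [hpow1, show d*(2*2^(n-1)) = 2*(d*2^(n-1)) by ring,
        Nat.mul_div_cancel_left _ (by norm_num)]
    have heven : Even (d * 2^n) := ⟨d * 2^(n-1), by rw [hpow1]; ring⟩
    have hmod : (d * 2^(n-1)) % 2^(n-2+1) = 0 := by
      rw [show n-2+1 = n-1 by omega]; exact Nat.mul_mod_left d _
    have hodd := K2a (n-2) (d * 2^(n-1)) hmod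
    set c0 := (2^(n-2) - 1 + d * 2^(n-1)).choose (d * 2^(n-1)) with hc0
    have hc0pos : c0 ≠ 0 := Nat.choose_pos (by omega) |>.ne'
    have hc0odd : ¬ 2 ∣ c0 := by
      intro hdvd
      have := (Nat.Prime.pow_dvd_iff_le_factorization Nat.prime_two hc0pos).mp
        (show 2^1 ∣ c0 by rw [pow_one]; exact hdvd)
      rw [Nat.factorization_def _ Nat.prime_two, hodd] at this
      omega
    have hSval : S (1 + 2^(n-1)) (2^(n-1)) = 2^(n-2) * (2^(n-1)+1) := by
      have h1 := two_S_succ (2^(n-1))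
      rw [show 1 + 2^(n-1) = 2^(n-1) + 1 by omega]
      have h2 : 2^(n-1) * (2^(n-1)+1) = 2 * (2^(n-2) * (2^(n-1)+1)) := by
        rw [hpow2]; ring
      omega
    -- T p₀ value
    have hTp₀ : T (d * 2^n, 1) = 2^(t-1) * ((c0 : ℤ) * ((2^(n-1)+1 : ℕ) : ℤ)) := by
      rw [hT]; simp only []
      rw [if_pos heven, hb2, hSval]
      rw [show t-1 = n-1 by omega]
      have hz : ((2:ℤ))^(n-1) = 2^(n-2) * 2 := by rw [← pow_succ]; congr 1; omega
      push_cast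
      rw [hz]; ring
    -- remaining terms divisible by 2^t
    have hrest : ∀ p ∈ (Finset.HasAntidiagonal.antidiagonal a).erase (d * 2^n, 1), (2^t : ℤ) ∣ T p := by
      intro p hp
      rw [Finset.mem_erase, Finset.HasAntidiagonal.mem_antidiagonal] at hp
      obtain ⟨hne, hsum⟩ := hp
      rw [hT]; simp only []
      by_cases hu : Even p.1
      · have hodd2 : p.2 % 2 = 1 := by
          rw [Nat.even_iff] at hu
          have hdv : (2:ℕ) ∣ d * 2^n := Dvd.dvd.mul_left ⟨2^(n-1), by rw [hpow1]⟩ d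
          have : a % 2 = 1 := by rw [ha]; omega
          omega
        have hv1 : 1 ≤ p.2 := by omega
        have hvne1 : p.2 ≠ 1 := by
          intro h1
          apply hne
          have : p.1 = d * 2^n := by omega
          rw [Prod.ext_iff]; exact ⟨this, h1⟩
        rcases le_or_gt t p.2 with hle | hlt
        · exact dvd_mul_of_dvd_left (dvd_mul_of_dvd_right (pow_dvd_pow (2:ℤ) hle) _) _
        · have hpv : padicValNat 2 p.2 = 0 :=
            padicValNat.eq_zero_of_not_dvd (by omega)
          have hS := G1 (n-1) p.2 (t - p.2) hv1 (by omega)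
          have h2 : (2^t : ℤ) = 2^p.2 * 2^(t - p.2) := by
            rw [← pow_add]; congr 1; omega
          rw [h2]
          exact mul_dvd_mul (dvd_mul_left _ _) hS
      · rw [if_neg hu]; simp
    obtain ⟨K, hK⟩ := Finset.dvd_sum hrest
    -- assemble
    obtain ⟨q₀, hq₀⟩ : ∃ q₀ : ℤ, (c0 : ℤ) = 2*q₀ + 1 :=
      ⟨(c0/2 : ℕ), by have : c0 % 2 = 1 := by omega
                      omega⟩
    refine ⟨q₀ * (2*(2^(n-2):ℕ) + 1) + (2^(n-2):ℕ) + K + j, ?_⟩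
    rw [hj, hTp₀, hK, hq₀]
    have hc2 : ((2^(n-1)+1 : ℕ) : ℤ) = 2*((2^(n-2):ℕ):ℤ) + 1 := by
      push_cast [hpow2]; ring
    rw [hc2, h2t]
    ring
  · -- m ≥ 1 case : special term (a, 0)
    have hp₀ : (a, 0) ∈ Finset.HasAntidiagonal.antidiagonal a := by
      rw [Finset.HasAntidiagonal.mem_antidiagonal]; simp
    rw [← Finset.add_sum_erase _ T hp₀] at hj
    have hpowm : (2:ℕ)^m = 2 * 2^(m-1) := by rw [← pow_succ']; congr 1; omega
    have hsplit2 : d*2^n + 2^m = 2*(d*2^(n-1) + 2^(m-1)) := by rw [hpow1, hpowm]; ring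
    have haeven : Even a := ⟨d*2^(n-1) + 2^(m-1), by rw [ha, hsplit2]; ring⟩
    have hb2 : a / 2 = d * 2^(n-1) + 2^(m-1) := by
      rw [ha, hsplit2, Nat.mul_div_cancel_left _ (by norm_num)]
    have hmod : (d * 2^(n-1) + 2^(m-1)) % 2^(n-2+1) = 2^(m-1) := by
      rw [show n-2+1 = n-1 by omega, show d * 2^(n-1) = 2^(n-1) * d by ring, Nat.mul_add_mod,
        Nat.mod_eq_of_lt (Nat.pow_lt_pow_right one_lt_two (by omega))]
    have hval := K2 (n-2) (d * 2^(n-1) + 2^(m-1)) (m-1) (by omega) hmod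
    rw [show n-2-(m-1) = t-1 by omega] at hval
    set c0 := (2^(n-2) - 1 + (d * 2^(n-1) + 2^(m-1))).choose (d * 2^(n-1) + 2^(m-1)) with hc0
    have hc0pos : c0 ≠ 0 := Nat.choose_pos (by omega) |>.ne'
    set u := c0 / 2^(t-1) with hu
    have hdecomp : 2^(t-1) * u = c0 := by
      rw [hu, ← hval, ← Nat.factorization_def _ Nat.prime_two]
      exact Nat.ordProj_mul_ordCompl_eq_self c0 2
    have huodd : ¬ 2 ∣ u := by
      have := Nat.not_dvd_ordCompl Nat.prime_two hc0pos
      rw [Nat.factorization_def _ Nat.prime_two, hval] at this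
      exact this
    have hTp₀ : T (a, 0) = 2^(t-1) * (u : ℕ) := by
      rw [hT]; simp only []
      rw [if_pos haeven, hb2, Nat.zero_add, S_self, ← hc0, ← hdecomp]
      push_cast
      ring
    have hrest : ∀ p ∈ (Finset.HasAntidiagonal.antidiagonal a).erase (a, 0), (2^t : ℤ) ∣ T p := by
      intro p hp
      rw [Finset.mem_erase, Finset.HasAntidiagonal.mem_antidiagonal] at hp
      obtain ⟨hne, hsum⟩ := hp
      rw [hT]; simp only []
      by_cases hu2 : Even p.1
      · have hv1 : 1 ≤ p.2 := by
          rcases Nat.eq_zero_or_pos p.2 with h0 | h1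
          · exfalso; apply hne; rw [Prod.ext_iff]; exact ⟨by omega, h0⟩
          · exact h1
        rcases le_or_gt t p.2 with hle | hlt
        · exact dvd_mul_of_dvd_left (dvd_mul_of_dvd_right (pow_dvd_pow (2:ℤ) hle) _) _
        · have hpv := pv_lt_self p.2 hv1
          have hS := G1 (n-1) p.2 (t - p.2) hv1 (by omega)
          have h2 : (2^t : ℤ) = 2^p.2 * 2^(t - p.2) := by
            rw [← pow_add]; congr 1; omega
          rw [h2]
          exact mul_dvd_mul (dvd_mul_left _ _) hS
      · rw [if_neg hu2]; simp
    obtain ⟨K, hK⟩ := Finset.dvd_sum hrest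
    obtain ⟨q₀, hq₀⟩ : ∃ q₀ : ℤ, ((u:ℕ) : ℤ) = 2*q₀ + 1 :=
      ⟨(u/2 : ℕ), by have : u % 2 = 1 := by omega
                     omega⟩
    refine ⟨q₀ + K + j, ?_⟩
    rw [hj, hTp₀, hK, hq₀, h2t]
    ring

/-- Sum of binary digits. -/
def s₂ (n : ℕ) : ℕ := (Nat.digits 2 n).sum

theorem stmt15 (m n c : ℕ) (hm : m < n) (hc : 1 ≤ c) :
    padicValNat 2 (S (c * 2 ^ n + 2 ^ m) (2 ^ n)) = n - 1 - m := by
  rcases Nat.lt_or_ge n 2 with hn2 | hn2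
  · have hn : n = 1 := by omega
    have hm0 : m = 0 := by omega
    subst hn; subst hm0
    rw [pow_one, pow_zero]
    have h := S_two_odd (2*c - 1)
    rw [show 2*c - 1 + 2 = c*2+1 by omega] at h
    rw [padicValNat.eq_zero_of_not_dvd h]
  · obtain ⟨d, rfl⟩ : ∃ d, c = d + 1 := ⟨c - 1, by omega⟩
    have hre : (d+1) * 2^n + 2^m = (d * 2^n + 2^m) + 2^n := by ring
    rw [hre]
    obtain ⟨q, hq⟩ := G2 n m d hn2 hm
    set N := S ((d * 2^n + 2^m) + 2^n) (2^n) with hNdef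
    have hqpos : 0 ≤ q := by
      by_contra hneg
      push_neg at hneg
      have hp := pow_pos (by norm_num : (0:ℤ) < 2) (n-m-1)
      have hnn := Int.natCast_nonneg N
      nlinarith
    lift q to ℕ using hqpos with q'
    have hN : N = 2^(n-m-1) * (2*q'+1) := by exact_mod_cast hq
    rw [hN, padicValNat.mul (pow_ne_zero _ (by norm_num)) (by omega),
      padicValNat.prime_pow, padicValNat.eq_zero_of_not_dvd (by omega)]
    omega
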